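/- arXiv:1407.4829 — 3 statements merged into one kernel-verified Lean document; each statement's English description precedes it below -/
import Mathlib

section
/- Let V be a finite-dimensional complex inner product space, and let A and B be self-adjoint linear operators on V. Let 𝓗 be a nonzero subspace of V, let α and β be real numbers such that A v = α v and B v = β v for every v ∈ 𝓗, and suppose ⟨φ, A φ⟩ ≤ α ‖φ‖² and ⟨φ, B φ⟩ ≤ β ‖φ‖² for all φ ∈ V (i.e., α and β are the largest eigenvalues of A and B respectively). Suppose further there is Δ_A > 0 such that ⟨φ, A φ⟩ ≤ (α − Δ_A) ‖φ‖² for every φ in the orthogonal complement of 𝓗. Then for every real λ with 0 ≤ λ and 2 λ ‖B‖ < Δ_A, the operator C := A − λ B satisfies C v = (α − λ β) v for all v ∈ 𝓗, ⟨φ, C φ⟩ ≤ (α − λ β) ‖φ‖² for all φ ∈ V, and the eigenspace of C for the eigenvalue α − λ β is exactly 𝓗. -/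
open scoped InnerProductSpace

/-- Lemma 3 of the paper (first part): a common top eigenspace of self-adjoint
operators `A` and `B` remains the top eigenspace of `C = A - λ • B` for
`λ` below the critical value `Δ_A / (2‖B‖)`. -/
theorem common_top_eigenspace_stable
    {V : Type*} [NormedAddCommGroup V] [InnerProductSpace ℂ V] [FiniteDimensional ℂ V]
    (A B : V →L[ℂ] V) (hA : IsSelfAdjoint A) (hB : IsSelfAdjoint B)
    (H : Submodule ℂ V) (hH : H ≠ ⊥) (α β : ℝ)
    (hAH : ∀ v ∈ H, A v = (α : ℂ) • v) (hBH : ∀ v ∈ H, B v = (β : ℂ) • v)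
    (hAtop : ∀ φ : V, (⟪φ, A φ⟫_ℂ).re ≤ α * ‖φ‖ ^ 2)
    (hBtop : ∀ φ : V, (⟪φ, B φ⟫_ℂ).re ≤ β * ‖φ‖ ^ 2)
    (ΔA : ℝ) (hΔA : 0 < ΔA)
    (hgap : ∀ φ ∈ Hᗮ, (⟪φ, A φ⟫_ℂ).re ≤ (α - ΔA) * ‖φ‖ ^ 2)
    (lam : ℝ) (hlam0 : 0 ≤ lam) (hlam : 2 * lam * ‖B‖ < ΔA) :
    (∀ v ∈ H, (A - (lam : ℂ) • B) v = ((α - lam * β : ℝ) : ℂ) • v) ∧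
    (∀ φ : V, (⟪φ, (A - (lam : ℂ) • B) φ⟫_ℂ).re ≤ (α - lam * β) * ‖φ‖ ^ 2) ∧
    Module.End.eigenspace (A - (lam : ℂ) • B : V →L[ℂ] V).toLinearMap
      ((α - lam * β : ℝ) : ℂ) = H := by
  set C : V →L[ℂ] V := A - (lam : ℂ) • B with hCdef
  have hCmapH : ∀ v ∈ H, C v = ((α - lam * β : ℝ) : ℂ) • v := by
    intro v hv
    simp only [hCdef, ContinuousLinearMap.sub_apply, ContinuousLinearMap.smul_apply,
      hAH v hv, hBH v hv, smul_smul]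
    rw [← sub_smul]
    norm_cast
  -- |β| ≤ ‖B‖
  obtain ⟨v₀, hv₀H, hv₀⟩ := Submodule.exists_mem_ne_zero_of_ne_bot hH
  have hβ : |β| ≤ ‖B‖ := by
    have h1 : ‖B v₀‖ ≤ ‖B‖ * ‖v₀‖ := B.le_opNorm v₀
    rw [hBH v₀ hv₀H, norm_smul, Complex.norm_real, Real.norm_eq_abs] at h1
    have h2 : 0 < ‖v₀‖ := norm_pos_iff.mpr hv₀
    exact le_of_mul_le_mul_right h1 h2
  -- C maps Hᗮ to itself
  have hCorth : ∀ w ∈ Hᗮ, C w ∈ Hᗮ := by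
    intro w hw
    rw [Submodule.mem_orthogonal] at hw ⊢
    intro u hu
    have hAsym := hA.isSymmetric u w
    have hBsym := hB.isSymmetric u w
    simp only [ContinuousLinearMap.coe_coe] at hAsym hBsym
    simp only [hCdef, ContinuousLinearMap.sub_apply, ContinuousLinearMap.smul_apply,
      inner_sub_right, inner_smul_right, ← hAsym, ← hBsym, hAH u hu, hBH u hu,
      inner_smul_left, hw u hu, mul_zero, sub_zero]
  -- decomposition computation
  have decomp : ∀ (vv ww : V), vv ∈ H → ww ∈ Hᗮ →
      (⟪vv + ww, C (vv + ww)⟫_ℂ).re = (α - lam * β) * ‖vv‖ ^ 2 + (⟪ww, C ww⟫_ℂ).re ∧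
      ‖vv + ww‖ ^ 2 = ‖vv‖ ^ 2 + ‖ww‖ ^ 2 := by
    intro vv ww hv hw
    have hvw : ⟪vv, ww⟫_ℂ = 0 := (Submodule.mem_orthogonal H ww).mp hw vv hv
    constructor
    · have hmap : C (vv + ww) = ((α - lam * β : ℝ) : ℂ) • vv + C ww := by
        rw [map_add, hCmapH vv hv]
      rw [hmap, inner_add_left, inner_add_right, inner_add_right]
      have h1 : ⟪vv, C ww⟫_ℂ = 0 :=
        (Submodule.mem_orthogonal H _).mp (hCorth ww hw) vv hv
      have h2 : ⟪ww, ((α - lam * β : ℝ) : ℂ) • vv⟫_ℂ = 0 := by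
        rw [inner_smul_right, ← inner_conj_symm, hvw]
        simp
      have hre : (⟪vv, vv⟫_ℂ).re = ‖vv‖ ^ 2 := inner_self_eq_norm_sq (𝕜 := ℂ) vv
      have him : (⟪vv, vv⟫_ℂ).im = 0 := inner_self_im (𝕜 := ℂ) vv
      rw [h1, h2, inner_smul_right]
      simp only [add_zero, zero_add, Complex.add_re, Complex.mul_re,
        Complex.ofReal_re, Complex.ofReal_im, hre, him]
      ring
    · have := norm_add_sq (𝕜 := ℂ) vv ww
      rw [hvw] at this
      simpa using this
  -- quadratic bound on Hᗮ
  have hCw : ∀ w ∈ Hᗮ, (⟪w, C w⟫_ℂ).re ≤ (α - ΔA + lam * ‖B‖) * ‖w‖ ^ 2 := by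
    intro w hw
    have h1 := hgap w hw
    have h2 : ‖⟪w, B w⟫_ℂ‖ ≤ ‖B‖ * ‖w‖ ^ 2 := by
      calc ‖⟪w, B w⟫_ℂ‖ ≤ ‖w‖ * ‖B w‖ := norm_inner_le_norm w (B w)
        _ ≤ ‖w‖ * (‖B‖ * ‖w‖) := by
            have := B.le_opNorm w
            exact mul_le_mul_of_nonneg_left this (norm_nonneg w)
        _ = ‖B‖ * ‖w‖ ^ 2 := by ring
    have h3 : -(⟪w, B w⟫_ℂ).re ≤ ‖B‖ * ‖w‖ ^ 2 := by
      have habs : |(⟪w, B w⟫_ℂ).re| ≤ ‖⟪w, B w⟫_ℂ‖ := Complex.abs_re_le_norm _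
      have := neg_abs_le (⟪w, B w⟫_ℂ).re
      linarith
    have hrw : (⟪w, C w⟫_ℂ).re = (⟪w, A w⟫_ℂ).re - lam * (⟪w, B w⟫_ℂ).re := by
      simp only [hCdef, ContinuousLinearMap.sub_apply, ContinuousLinearMap.smul_apply,
        inner_sub_right, inner_smul_right, Complex.sub_re, Complex.mul_re,
        Complex.ofReal_re, Complex.ofReal_im, Complex.coe_smul]
      rw [RCLike.real_smul_eq_coe_smul (K := ℂ), inner_smul_right]
      simp [Complex.mul_re]
    rw [hrw]
    nlinarith [mul_le_mul_of_nonneg_left h3 hlam0]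
  -- key strict inequality
  have hkey : α - ΔA + lam * ‖B‖ < α - lam * β := by
    have h1 : lam * β ≤ lam * |β| := mul_le_mul_of_nonneg_left (le_abs_self β) hlam0
    have h2 : lam * |β| ≤ lam * ‖B‖ := mul_le_mul_of_nonneg_left hβ hlam0
    linarith
  have part1 := hCmapH
  have part2 : ∀ φ : V, (⟪φ, C φ⟫_ℂ).re ≤ (α - lam * β) * ‖φ‖ ^ 2 := by
    intro φ
    obtain ⟨v, hv, w, hw, rfl⟩ := Submodule.exists_add_mem_mem_orthogonal (K := H) φ
    obtain ⟨e1, e2⟩ := decomp v w hv hw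
    have h := hCw w hw
    rw [e1, e2]
    nlinarith [sq_nonneg ‖w‖]
  refine ⟨part1, part2, ?_⟩
  apply le_antisymm
  · intro φ hφ
    rw [Module.End.mem_eigenspace_iff] at hφ
    simp only [ContinuousLinearMap.coe_coe] at hφ
    obtain ⟨v, hv, w, hw, rfl⟩ := Submodule.exists_add_mem_mem_orthogonal (K := H) φ
    obtain ⟨e1, e2⟩ := decomp v w hv hw
    have h := hCw w hw
    have hval : (⟪v + w, C (v + w)⟫_ℂ).re = (α - lam * β) * ‖v + w‖ ^ 2 := by
      have hre : (⟪v + w, v + w⟫_ℂ).re = ‖v + w‖ ^ 2 := inner_self_eq_norm_sq (𝕜 := ℂ) _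
      have him : (⟪v + w, v + w⟫_ℂ).im = 0 := inner_self_im (𝕜 := ℂ) _
      rw [hφ, inner_smul_right, Complex.mul_re, Complex.ofReal_re, Complex.ofReal_im,
        hre, him]
      ring
    rw [e1, e2] at hval
    have hw0 : ‖w‖ ^ 2 ≤ 0 := by nlinarith [sq_nonneg ‖w‖]
    have hw0' : w = 0 := by
      have : ‖w‖ = 0 := by nlinarith [sq_nonneg ‖w‖, norm_nonneg w]
      simpa using this
    simpa [hw0'] using hv
  · intro v hv
    rw [Module.End.mem_eigenspace_iff]
    simpa using hCmapH v hv
end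

section
/- Let V be a finite-dimensional complex inner product space, and let A and B be self-adjoint linear operators on V. Let 𝓗 be a nonzero subspace of V, let α and β be real numbers such that A v = α v and B v = β v for every v ∈ 𝓗, and suppose ⟨φ, B φ⟩ ≤ β ‖φ‖² for all φ ∈ V. Suppose there is Δ_A > 0 such that ⟨φ, A φ⟩ ≤ (α − Δ_A) ‖φ‖² for every φ in the orthogonal complement of 𝓗. Then for every real λ with 0 ≤ λ and 2 λ ‖B‖ < Δ_A, the operator C := A − λ B satisfies ⟨φ, C φ⟩ ≤ (α − λ β − (Δ_A − 2 λ ‖B‖)) ‖φ‖² for every φ in the orthogonal complement of 𝓗; that is, C has a spectral gap of at least Δ_A − 2 λ ‖B‖ between the eigenvalue α − λ β on 𝓗 and the rest of its spectrum. -/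
open scoped InnerProductSpace

set_option synthInstance.maxHeartbeats 400000 in
/-- Lemma 3 of the paper (gap bound): writing `λ_c = Δ_A / (2‖B‖)`, the operator
`C = A - λ • B` has a spectral gap of at least `Δ_A - 2λ‖B‖ = 2‖B‖(λ_c - λ)`
between the eigenvalue `α - λβ` on `𝓗` and the rest of its spectrum. -/
theorem gap_of_perturbed_operator
    {V : Type*} [NormedAddCommGroup V] [InnerProductSpace ℂ V] [FiniteDimensional ℂ V]
    (A B : V →L[ℂ] V) (hA : IsSelfAdjoint A) (hB : IsSelfAdjoint B)
    (H : Submodule ℂ V) (hH : H ≠ ⊥) (α β : ℝ)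
    (hAH : ∀ v ∈ H, A v = (α : ℂ) • v) (hBH : ∀ v ∈ H, B v = (β : ℂ) • v)
    (hBtop : ∀ φ : V, (⟪φ, B φ⟫_ℂ).re ≤ β * ‖φ‖ ^ 2)
    (ΔA : ℝ) (hΔA : 0 < ΔA)
    (hgap : ∀ φ ∈ Hᗮ, (⟪φ, A φ⟫_ℂ).re ≤ (α - ΔA) * ‖φ‖ ^ 2)
    (lam : ℝ) (hlam0 : 0 ≤ lam) (hlam : 2 * lam * ‖B‖ < ΔA) :
    ∀ φ ∈ Hᗮ, (⟪φ, (A - (lam : ℂ) • B) φ⟫_ℂ).re ≤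
      (α - lam * β - (ΔA - 2 * lam * ‖B‖)) * ‖φ‖ ^ 2 := by
  obtain ⟨v, hv, hv0⟩ := Submodule.exists_mem_ne_zero_of_ne_bot hH
  have hvpos : 0 < ‖v‖ := norm_pos_iff.mpr hv0
  have hβB : β ≤ ‖B‖ := by
    have h1 : ‖B v‖ ≤ ‖B‖ * ‖v‖ := B.le_opNorm v
    rw [hBH v hv, norm_smul] at h1
    have h2 : |β| * ‖v‖ ≤ ‖B‖ * ‖v‖ := by simpa [Complex.norm_real] using h1
    exact (le_abs_self β).trans (le_of_mul_le_mul_right h2 hvpos)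
  intro φ hφ
  have hsplit : (⟪φ, (A - (lam : ℂ) • B) φ⟫_ℂ).re
      = (⟪φ, A φ⟫_ℂ).re - lam * (⟪φ, B φ⟫_ℂ).re := by
    rw [ContinuousLinearMap.sub_apply, inner_sub_right, ContinuousLinearMap.smul_apply,
      inner_smul_right]
    simp [Complex.mul_re]
  have hA' := hgap φ hφ
  have hCS : -(‖B‖ * ‖φ‖ ^ 2) ≤ (⟪φ, B φ⟫_ℂ).re := by
    have h1 : ‖⟪φ, B φ⟫_ℂ‖ ≤ ‖φ‖ * ‖B φ‖ := norm_inner_le_norm _ _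
    have h2 : ‖B φ‖ ≤ ‖B‖ * ‖φ‖ := B.le_opNorm φ
    have h3 : -‖⟪φ, B φ⟫_ℂ‖ ≤ (⟪φ, B φ⟫_ℂ).re := by
      have := Complex.abs_re_le_norm (⟪φ, B φ⟫_ℂ)
      rw [abs_le] at this
      simpa using this.1
    have h4 : 0 ≤ ‖φ‖ := norm_nonneg _
    nlinarith
  rw [hsplit]
  nlinarith [sq_nonneg ‖φ‖, mul_le_mul_of_nonneg_left hCS hlam0,
    mul_nonneg (mul_nonneg hlam0 (sub_nonneg.2 hβB)) (sq_nonneg ‖φ‖)]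
end

section
/- Let A be a commutative algebra over the rational numbers, let R be a finite set with |R| = n ≥ 1, and let p : R → A. Then ∑_{i=1}^{n} (1/i) · ∑_{S ⊆ R, |S| = i} (∏_{s ∈ S} (1 − p(s))) · (∏_{s ∈ R∖S} p(s)) = −h_n · ∏_{s ∈ R} p(s) + ∑_{j=1}^{n} (1/(j · C(n, j))) · ∑_{T ⊆ R, |T| = n − j} ∏_{s ∈ T} p(s), where h_n = ∑_{j=1}^{n} 1/j is the n-th harmonic number and C(n, j) is the binomial coefficient. -/
open Finset

noncomputable def Fa (x m : ℕ) : ℚ := ∑ k ∈ range (m+1), (-1:ℚ)^k * (m.choose k) / ((x:ℚ) + k)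

lemma Fa_rec (x m : ℕ) : Fa x (m+1) = Fa x m - Fa (x+1) m := by
  have hA : Fa x (m+1) = (∑ k ∈ range (m+1), (-1:ℚ)^(k+1) * (((m+1).choose (k+1):ℕ):ℚ) / ((x:ℚ)+(k+1))) + 1/(x:ℚ) := by
    unfold Fa; rw [Finset.sum_range_succ']; push_cast; norm_num
  have hB : Fa x m = (∑ k ∈ range (m+1), (-1:ℚ)^(k+1) * ((m.choose (k+1):ℕ):ℚ) / ((x:ℚ)+(k+1))) + 1/(x:ℚ) := by
    unfold Fa; rw [Finset.sum_range_succ', Finset.sum_range_succ]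
    simp [Nat.choose_succ_self]
  have hC : Fa (x+1) m = ∑ k ∈ range (m+1), (-1:ℚ)^k * ((m.choose k:ℕ):ℚ) / (((x:ℚ)+1)+k) := by
    unfold Fa; apply Finset.sum_congr rfl; intro k _; push_cast; ring
  have key : ∑ k ∈ range (m+1), (-1:ℚ)^(k+1) * (((m+1).choose (k+1):ℕ):ℚ) / ((x:ℚ)+(k+1))
      = ∑ k ∈ range (m+1), ((-1:ℚ)^(k+1) * ((m.choose (k+1):ℕ):ℚ) / ((x:ℚ)+(k+1))
          - (-1:ℚ)^k * ((m.choose k:ℕ):ℚ) / (((x:ℚ)+1)+k)) := by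
    apply Finset.sum_congr rfl; intro k _
    rw [Nat.choose_succ_succ]; push_cast; ring
  rw [hA, hB, hC, key, Finset.sum_sub_distrib]
  ring

lemma Fa_pos (m : ℕ) : ∀ y : ℕ, Fa (y+1) m = (m.factorial : ℚ) * (y.factorial) / ((y+1+m).factorial) := by
  induction m with
  | zero =>
    intro y
    unfold Fa
    simp [Nat.factorial_succ]
    push_cast
    field_simp
  | succ m ih =>
    intro y
    rw [Fa_rec]
    have h2 : (y+1)+1 = (y+1)+1 := rfl
    rw [ih y, show y+1+1 = (y+1)+1 from rfl, ih (y+1)]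
    have e1 : ((y+1+(m+1)).factorial : ℚ) = ((y+1+m+1) : ℚ) * ((y+1+m).factorial : ℚ) := by
      rw [show y+1+(m+1) = (y+1+m)+1 from by ring, Nat.factorial_succ]; push_cast; ring
    have e2 : ((y+1+1+m).factorial : ℚ) = ((y+1+m+1) : ℚ) * ((y+1+m).factorial : ℚ) := by
      rw [show y+1+1+m = (y+1+m)+1 from by ring, Nat.factorial_succ]; push_cast; ring
    have e3 : ((m+1).factorial : ℚ) = ((m+1) : ℚ) * (m.factorial : ℚ) := by
      rw [Nat.factorial_succ]; push_cast; ring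
    have e4 : ((y+1).factorial : ℚ) = ((y+1) : ℚ) * (y.factorial : ℚ) := by
      rw [Nat.factorial_succ]; push_cast; ring
    rw [e1, e2, e3, e4]
    have f1 : ((y+1+m).factorial : ℚ) ≠ 0 := by exact_mod_cast Nat.factorial_ne_zero _
    have f2 : ((y+1+m+1) : ℚ) ≠ 0 := by positivity
    field_simp
    ring

lemma Fa_zero (m : ℕ) : Fa 0 m = -∑ j ∈ Icc 1 m, 1/(j:ℚ) := by
  induction m with
  | zero => unfold Fa; simp
  | succ m ih =>
    rw [Fa_rec, ih, show (0:ℕ)+1 = 0+1 from rfl, Fa_pos m 0]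
    rw [Finset.sum_Icc_succ_top (by omega : 1 ≤ m+1)]
    have e1 : ((0+1+m).factorial : ℚ) = ((m+1).factorial : ℚ) := by norm_num [add_comm]
    rw [e1, Nat.factorial_succ]
    have f1 : ((m.factorial : ℕ) : ℚ) ≠ 0 := by exact_mod_cast Nat.factorial_ne_zero _
    have f2 : ((m:ℚ)+1) ≠ 0 := by positivity
    push_cast
    field_simp
    ring

lemma coef_lt (n m : ℕ) (h : m < n) :
    Fa (n-m) m = 1/(((n-m:ℕ):ℚ) * ((n.choose (n-m) : ℕ):ℚ)) := by
  obtain ⟨y, hy⟩ : ∃ y, n - m = y + 1 := ⟨n - m - 1, by omega⟩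
  rw [hy, Fa_pos, show y+1+m = n from by omega]
  have key : (n.choose (y+1)) * (y+1).factorial * m.factorial = n.factorial := by
    have h2 := Nat.choose_mul_factorial_mul_factorial (show y+1 ≤ n by omega)
    rwa [show n-(y+1) = m from by omega] at h2
  have keyQ : ((n.choose (y+1) : ℕ):ℚ) * (((y:ℚ)+1) * (y.factorial:ℚ)) * (m.factorial:ℚ) = (n.factorial:ℚ) := by
    have := congrArg (fun t : ℕ => (t : ℚ)) key
    push_cast [Nat.factorial_succ] at this ⊢
    linarith [this]
  have f1 : ((n.factorial : ℕ):ℚ) ≠ 0 := by exact_mod_cast Nat.factorial_ne_zero _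
  have f2 : ((y:ℚ)+1) ≠ 0 := by positivity
  have f3 : ((n.choose (y+1) : ℕ):ℚ) ≠ 0 := by
    have := Nat.choose_pos (show y+1 ≤ n by omega)
    exact_mod_cast Nat.pos_iff_ne_zero.mp this
  have fy : ((y.factorial : ℕ):ℚ) ≠ 0 := by exact_mod_cast Nat.factorial_ne_zero _
  have fm : ((m.factorial : ℕ):ℚ) ≠ 0 := by exact_mod_cast Nat.factorial_ne_zero _
  push_cast
  field_simp
  push_cast [Nat.factorial_succ] at keyQ ⊢
  linear_combination keyQ

lemma icc_to_range {M : Type*} [AddCommMonoid M] (n : ℕ) (f : ℕ → M) :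
    ∑ i ∈ Icc 1 n, f i = ∑ i ∈ range n, f (i+1) := by
  rw [← Finset.Ico_add_one_right_eq_Icc, Finset.sum_Ico_eq_sum_range]; simp [add_comm]

/-- The algebraic content of Eq. (41) of the paper: the explicit expansion of
`g̃(R)` (after factoring out `Δ̃ P₀` and the common projector `P_{Λ∖R}`),
`∑_{i=1}^n (1/i) P_i = -h_n ∏_s p_s + ∑_{j=1}^n (j C(n,j))⁻¹ ∑_{|T| = n-j} ∏_{s∈T} p_s`. -/
theorem resolvent_expansion_eq41
    {A : Type*} [CommRing A] [Algebra ℚ A] {ι : Type*} [Fintype ι] [DecidableEq ι]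
    (p : ι → A) (n : ℕ) (hn : 1 ≤ n) (hcard : Fintype.card ι = n) :
    ∑ i ∈ Finset.Icc 1 n, (1 / (i : ℚ)) •
        ∑ S ∈ Finset.powersetCard i (Finset.univ : Finset ι),
          (∏ s ∈ S, (1 - p s)) * ∏ s ∈ Sᶜ, p s =
    (-∑ j ∈ Finset.Icc 1 n, 1 / (j : ℚ)) • ∏ s, p s +
      ∑ j ∈ Finset.Icc 1 n, (1 / ((j : ℚ) * (Nat.choose n j : ℚ))) •
        ∑ T ∈ Finset.powersetCard (n - j) (Finset.univ : Finset ι),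
          ∏ s ∈ T, p s := by
  classical
  have huniv : (Finset.univ : Finset ι).card = n := by simpa using hcard
  set c : ℕ → ℚ := fun m => if m = n then -(∑ j ∈ Icc 1 n, 1/(j:ℚ))
      else 1/(((n-m:ℕ):ℚ) * ((n.choose (n-m) : ℕ):ℚ)) with hc
  -- Step A : LHS as a sum over the full powerset
  have stepA : ∑ i ∈ Finset.Icc 1 n, (1 / (i : ℚ)) •
        ∑ S ∈ Finset.powersetCard i (Finset.univ : Finset ι),
          (∏ s ∈ S, (1 - p s)) * ∏ s ∈ Sᶜ, p s
      = ∑ S ∈ (Finset.univ : Finset ι).powerset,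
          (1 / (S.card : ℚ)) • ((∏ s ∈ S, (1 - p s)) * ∏ s ∈ Sᶜ, p s) := by
    rw [Finset.sum_powerset, huniv, Finset.sum_range_succ']
    have h0 : ∑ S ∈ Finset.powersetCard 0 (Finset.univ : Finset ι),
        (1 / (S.card : ℚ)) • ((∏ s ∈ S, (1 - p s)) * ∏ s ∈ Sᶜ, p s) = 0 := by
      rw [Finset.powersetCard_zero]
      simp
    rw [h0, add_zero, icc_to_range]
    apply Finset.sum_congr rfl
    intro i _
    rw [Finset.smul_sum]
    apply Finset.sum_congr rfl
    intro S hS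
    rw [(Finset.mem_powersetCard.mp hS).2]
  -- Step B : RHS as a sum over the full powerset
  have stepB : (-∑ j ∈ Finset.Icc 1 n, 1 / (j : ℚ)) • ∏ s, p s +
      ∑ j ∈ Finset.Icc 1 n, (1 / ((j : ℚ) * (Nat.choose n j : ℚ))) •
        ∑ T ∈ Finset.powersetCard (n - j) (Finset.univ : Finset ι),
          ∏ s ∈ T, p s
      = ∑ U ∈ (Finset.univ : Finset ι).powerset, c U.card • ∏ s ∈ U, p s := by
    rw [Finset.sum_powerset, huniv]
    have hcongr : ∀ j, ∑ U ∈ Finset.powersetCard j (Finset.univ : Finset ι), c U.card • ∏ s ∈ U, p s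
        = c j • ∑ U ∈ Finset.powersetCard j (Finset.univ : Finset ι), ∏ s ∈ U, p s := by
      intro j
      rw [Finset.smul_sum]
      apply Finset.sum_congr rfl
      intro U hU
      rw [(Finset.mem_powersetCard.mp hU).2]
    simp only [hcongr]
    rw [Finset.sum_range_succ]
    have htop : c n • ∑ U ∈ Finset.powersetCard n (Finset.univ : Finset ι), ∏ s ∈ U, p s
        = (-∑ j ∈ Finset.Icc 1 n, 1 / (j : ℚ)) • ∏ s, p s := by
      have : Finset.powersetCard n (Finset.univ : Finset ι) = {Finset.univ} := by
        rw [← huniv, Finset.powersetCard_self]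
      rw [this, Finset.sum_singleton, hc]
      simp
    rw [htop, add_comm]
    congr 1
    rw [icc_to_range, ← Finset.sum_range_reflect (fun j => c j • ∑ U ∈ Finset.powersetCard j (Finset.univ : Finset ι), ∏ s ∈ U, p s) n]
    apply Finset.sum_congr rfl
    intro i hi
    have hi' : i < n := Finset.mem_range.mp hi
    have e1 : n - 1 - i = n - (i+1) := by omega
    have e2 : n - (i+1) ≠ n := by omega
    have e3 : n - (n - (i+1)) = i + 1 := by omega
    simp only [e1, hc, if_neg e2, e3]
  rw [stepA, stepB]
  -- Step C : core identity
  have sgn : ∀ (k:ℕ) (x : A), (-1:ℚ)^k • x = (-1:A)^k * x := by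
    intro k x; rw [Algebra.smul_def, map_pow, map_neg, map_one]
  have expand : ∀ S : Finset ι,
      (1 / (S.card : ℚ)) • ((∏ s ∈ S, (1 - p s)) * ∏ s ∈ Sᶜ, p s)
      = ∑ t ∈ S.powerset, ((-1:ℚ)^t.card / (S.card:ℚ)) • ∏ s ∈ t ∪ Sᶜ, p s := by
    intro S
    have h1 : (∏ s ∈ S, (1 - p s)) = ∑ t ∈ S.powerset, (-1:A)^t.card * ∏ s ∈ t, p s := by
      have : ∀ s ∈ S, (1 - p s) = (-p s) + 1 := fun s _ => by ring
      rw [Finset.prod_congr rfl this, Finset.prod_add]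
      apply Finset.sum_congr rfl
      intro t _
      rw [Finset.prod_const_one, mul_one]
      rw [show (∏ s ∈ t, -p s) = ∏ s ∈ t, ((-1:A) * p s) from Finset.prod_congr rfl (fun s _ => by ring)]
      rw [Finset.prod_mul_distrib, Finset.prod_const]
    rw [h1, Finset.sum_mul, Finset.smul_sum]
    apply Finset.sum_congr rfl
    intro t ht
    have hts : t ⊆ S := Finset.mem_powerset.mp ht
    have hdis : Disjoint t Sᶜ := (disjoint_compl_right).mono_left hts
    rw [mul_assoc, ← Finset.prod_union hdis, ← sgn, ← mul_smul]
    congr 1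
    ring
  simp only [expand]
  rw [Finset.sum_sigma' ((Finset.univ : Finset ι).powerset) (fun S => S.powerset)
        (fun S t => ((-1:ℚ)^t.card / (S.card:ℚ)) • ∏ s ∈ t ∪ Sᶜ, p s)]
  have keyC : ∑ q ∈ ((Finset.univ : Finset ι).powerset).sigma (fun S => S.powerset),
        ((-1:ℚ)^q.2.card / (q.1.card:ℚ)) • ∏ s ∈ q.2 ∪ q.1ᶜ, p s
      = ∑ q ∈ ((Finset.univ : Finset ι).powerset).sigma (fun U => U.powerset),
        ((-1:ℚ)^q.2.card / ((q.2.card + (n - q.1.card) : ℕ):ℚ)) • ∏ s ∈ q.1, p s := by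
    apply Finset.sum_nbij' (fun q => (⟨q.2 ∪ q.1ᶜ, q.2⟩ : Σ _ : Finset ι, Finset ι))
      (fun q => (⟨q.2 ∪ q.1ᶜ, q.2⟩ : Σ _ : Finset ι, Finset ι))
    · rintro ⟨S, t⟩ hq
      simp only [Finset.mem_sigma, Finset.mem_powerset] at hq ⊢
      exact ⟨Finset.subset_univ _, Finset.subset_union_left⟩
    · rintro ⟨S, t⟩ hq
      simp only [Finset.mem_sigma, Finset.mem_powerset] at hq ⊢
      exact ⟨Finset.subset_univ _, Finset.subset_union_left⟩
    · rintro ⟨S, t⟩ hq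
      simp only [Finset.mem_sigma, Finset.mem_powerset] at hq
      have : t ∪ (t ∪ Sᶜ)ᶜ = S := by
        ext a
        simp only [Finset.mem_union, Finset.mem_compl]
        have := @hq.2 a
        tauto
      exact congrArg (fun X => (⟨X, t⟩ : Σ _ : Finset ι, Finset ι)) this
    · rintro ⟨U, t⟩ hq
      simp only [Finset.mem_sigma, Finset.mem_powerset] at hq
      have : t ∪ (t ∪ Uᶜ)ᶜ = U := by
        ext a
        simp only [Finset.mem_union, Finset.mem_compl]
        have := @hq.2 a
        tauto
      exact congrArg (fun X => (⟨X, t⟩ : Σ _ : Finset ι, Finset ι)) this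
    · rintro ⟨S, t⟩ hq
      simp only [Finset.mem_sigma, Finset.mem_powerset] at hq
      have hts : t ⊆ S := hq.2
      have hdis : Disjoint t Sᶜ := (disjoint_compl_right).mono_left hts
      have hS : S.card ≤ n := by rw [← huniv]; exact Finset.card_le_univ S
      have ht : t.card ≤ S.card := Finset.card_le_card hts
      have hcu : (t ∪ Sᶜ).card = t.card + (n - S.card) := by
        rw [Finset.card_union_of_disjoint hdis, Finset.card_compl, hcard]
      have : t.card + (n - (t ∪ Sᶜ).card) = S.card := by omega
      simp only [this]
  rw [keyC, ← Finset.sum_sigma' ((Finset.univ : Finset ι).powerset) (fun U => U.powerset)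
        (fun U t => ((-1:ℚ)^t.card / ((t.card + (n - U.card) : ℕ):ℚ)) • ∏ s ∈ U, p s)]
  apply Finset.sum_congr rfl
  intro U hU
  have hUn : U.card ≤ n := by rw [← huniv]; exact Finset.card_le_univ U
  rw [← Finset.sum_smul]
  congr 1
  have hgrp : ∑ t ∈ U.powerset, (-1:ℚ)^t.card / ((t.card + (n - U.card) : ℕ):ℚ)
      = Fa (n - U.card) U.card := by
    rw [Finset.sum_powerset]
    unfold Fa
    apply Finset.sum_congr rfl
    intro k _
    rw [Finset.sum_powersetCard k U (fun m => (-1:ℚ)^m / ((m + (n - U.card) : ℕ):ℚ))]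
    rw [nsmul_eq_mul]
    push_cast
    ring
  rw [hgrp, hc]
  by_cases hm : U.card = n
  · rw [hm, Nat.sub_self, Fa_zero]
    simp
  · simp only [if_neg hm]
    exact coef_lt n U.card (by omega)
end
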